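/- arXiv:1501.03905 — 3 statements merged into one kernel-verified Lean document; each statement's English description precedes it below -/
import Mathlib

section
/- Let p be an integer and q a positive integer with gcd(p,q)=1. For any integer n, define c_{n,p,q} = (1/q) · Σ_{k=0}^{q-1} (-1)^{kp} · exp(iπ(p/q)k²) · exp(-2iπ nk/q). Then |c_{n,p,q}| = 1/√q. -/
open Real

noncomputable def ee (q : ℕ) (m : ℤ) : ℂ := Complex.exp (Real.pi * Complex.I * m / q)

def phi (p n : ℤ) (q : ℕ) (k : ℕ) : ℤ := p * k ^ 2 + p * q * k - 2 * n * k

noncomputable def ff (p n : ℤ) (q : ℕ) (k : ℕ) : ℂ := ee q (phi p n q k)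

lemma ee_add (q : ℕ) (a b : ℤ) : ee q (a + b) = ee q a * ee q b := by
  simp [ee, ← Complex.exp_add, ← add_div]
  ring_nf

lemma ee_zero (q : ℕ) : ee q 0 = 1 := by simp [ee]

lemma ee_two_q (q : ℕ) (hq : q ≠ 0) (m : ℤ) : ee q (2 * q * m) = 1 := by
  have hq' : (q : ℂ) ≠ 0 := Nat.cast_ne_zero.mpr hq
  have : (Real.pi : ℂ) * Complex.I * ((2 * q * m : ℤ) : ℂ) / q
      = (m : ℂ) * (2 * Real.pi * Complex.I) := by
    push_cast
    field_simp
  rw [ee, this, Complex.exp_int_mul_two_pi_mul_I]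

lemma conj_ee (q : ℕ) (m : ℤ) : (starRingEnd ℂ) (ee q m) = ee q (-m) := by
  rw [ee, ee, ← Complex.exp_conj]
  congr 1
  simp [map_div₀]

lemma ee_nat_mul (q : ℕ) (m : ℕ) (a : ℤ) : ee q ((m : ℤ) * a) = ee q a ^ m := by
  rw [ee, ee, ← Complex.exp_nat_mul]
  congr 1
  push_cast
  ring

lemma phi_add (p n : ℤ) (q : ℕ) (a b : ℕ) :
    phi p n q (a + b) = phi p n q a + 2 * p * a * b + phi p n q b := by
  simp only [phi]
  push_cast
  ring

lemma ff_add_q (p n : ℤ) (q : ℕ) (hq : q ≠ 0) (k : ℕ) : ff p n q (k + q) = ff p n q k := by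
  have h : phi p n q (k + q) = phi p n q k + 2 * q * (p * k + p * q - n) := by
    simp only [phi]
    push_cast
    ring
  rw [ff, h, ee_add, ee_two_q q hq, mul_one, ff]

lemma ff_mod (p n : ℤ) (q : ℕ) (hq : q ≠ 0) (m : ℕ) : ff p n q (m % q) = ff p n q m := by
  have key : ∀ j k, ff p n q (k + j * q) = ff p n q k := by
    intro j
    induction j with
    | zero => simp
    | succ j ih =>
      intro k
      have : k + (j + 1) * q = (k + j * q) + q := by ring
      rw [this, ff_add_q p n q hq, ih]
  conv_rhs => rw [← Nat.mod_add_div m q, mul_comm q (m / q)]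
  rw [key]

lemma geom_zero (p : ℤ) (q : ℕ) (hq : q ≠ 0) (hcop : Int.gcd p (q : ℤ) = 1) (d : ℕ)
    (hd : d < q) (hd0 : d ≠ 0) :
    ∑ m ∈ Finset.range q, ee q (2 * p * d * m) = 0 := by
  set ζ : ℂ := ee q (2 * p * d) with hζ
  have hterm : ∀ m : ℕ, ee q (2 * p * (d : ℤ) * (m : ℤ)) = ζ ^ m := by
    intro m
    rw [hζ, ← ee_nat_mul]
    congr 1
    ring
  have hζq : ζ ^ q = 1 := by
    rw [hζ, ← ee_nat_mul]
    have h : (q : ℤ) * (2 * p * d) = 2 * q * (p * d) := by ring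
    rw [h, ee_two_q q hq]
  have hζ1 : ζ ≠ 1 := by
    intro h
    rw [hζ, ee, Complex.exp_eq_one_iff] at h
    obtain ⟨m, hm⟩ := h
    have hq' : (q : ℂ) ≠ 0 := Nat.cast_ne_zero.mpr hq
    have h2πI : (2 : ℂ) * Real.pi * Complex.I ≠ 0 := by
      simp [Real.pi_ne_zero, Complex.I_ne_zero, Complex.ofReal_ne_zero]
    have key : ((2 : ℂ) * Real.pi * Complex.I) * ((p : ℂ) * d) =
        ((2 : ℂ) * Real.pi * Complex.I) * ((m : ℂ) * q) := by
      field_simp at hm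
      push_cast at hm
      linear_combination ((Real.pi : ℂ) * Complex.I) * hm
    have hpd : ((p * d : ℤ) : ℂ) = ((m * q : ℤ) : ℂ) := by
      push_cast
      exact mul_left_cancel₀ h2πI key
    have hpd' : (p * (d : ℤ)) = m * q := by exact_mod_cast hpd
    have hdvd : (q : ℤ) ∣ p * d := ⟨m, by linarith [hpd']⟩
    have hdvd2 : (q : ℤ) ∣ (d : ℤ) := by
      have hcop' : Int.gcd (q : ℤ) p = 1 := by rwa [Int.gcd_comm]
      exact Int.dvd_of_dvd_mul_left_of_gcd_one (by rwa [mul_comm] at hdvd) hcop'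
    have : q ∣ d := Int.ofNat_dvd.mp (by exact_mod_cast hdvd2)
    have := Nat.le_of_dvd (Nat.pos_of_ne_zero hd0) this
    omega
  have := geom_sum_eq hζ1 q
  simp only [hterm]
  rw [this, hζq, sub_self, zero_div]

lemma sum_range_eq_zmod (q : ℕ) [NeZero q] (g : ℕ → ℂ) :
    ∑ k ∈ Finset.range q, g k = ∑ x : ZMod q, g (ZMod.val x) := by
  refine Finset.sum_nbij' (fun k => (k : ZMod q)) (fun x => x.val) ?_ ?_ ?_ ?_ ?_
  · intro a _; exact Finset.mem_univ _
  · intro x _; exact Finset.mem_range.mpr (ZMod.val_lt x)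
  · intro a ha; exact ZMod.val_cast_of_lt (Finset.mem_range.mp ha)
  · intro x _; exact ZMod.natCast_rightInverse x
  · intro a ha; rw [ZMod.val_cast_of_lt (Finset.mem_range.mp ha)]

theorem abs_gauss_coeff (p : ℤ) (q : ℕ) (hq : 1 ≤ q) (hcop : Int.gcd p (q : ℤ) = 1) (n : ℤ) :
    ‖(1 / (q : ℂ)) * ∑ k ∈ Finset.range q,
      (-1 : ℂ) ^ ((k : ℤ) * p) * Complex.exp (Complex.I * (π : ℂ) * (p : ℂ) * (k : ℂ) ^ 2 / (q : ℂ)) *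
        Complex.exp (-2 * (π : ℂ) * Complex.I * (n : ℂ) * (k : ℂ) / (q : ℂ))‖
      = 1 / Real.sqrt q := by
  have hq0 : q ≠ 0 := by omega
  haveI : NeZero q := ⟨hq0⟩
  have hq' : (q : ℂ) ≠ 0 := Nat.cast_ne_zero.mpr hq0
  have hsummand : ∀ k : ℕ,
      (-1 : ℂ) ^ ((k : ℤ) * p) * Complex.exp (Complex.I * (π : ℂ) * (p : ℂ) * (k : ℂ) ^ 2 / (q : ℂ)) *
        Complex.exp (-2 * (π : ℂ) * Complex.I * (n : ℂ) * (k : ℂ) / (q : ℂ)) = ff p n q k := by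
    intro k
    rw [← Complex.exp_pi_mul_I, ← Complex.exp_int_mul, ← Complex.exp_add, ← Complex.exp_add,
      ff, ee]
    congr 1
    push_cast [phi]
    field_simp
    ring
  have hSrw : (∑ k ∈ Finset.range q,
      (-1 : ℂ) ^ ((k : ℤ) * p) * Complex.exp (Complex.I * (π : ℂ) * (p : ℂ) * (k : ℂ) ^ 2 / (q : ℂ)) *
        Complex.exp (-2 * (π : ℂ) * Complex.I * (n : ℂ) * (k : ℂ) / (q : ℂ)))
      = ∑ k ∈ Finset.range q, ff p n q k :=
    Finset.sum_congr rfl fun k _ => hsummand k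
  set S : ℂ := ∑ k ∈ Finset.range q, ff p n q k with hS
  have hterm : ∀ a b : ℕ, ff p n q (a + b) * (starRingEnd ℂ) (ff p n q a)
      = ee q (phi p n q b + 2 * p * b * a) := by
    intro a b
    rw [ff, ff, conj_ee, ← ee_add]
    congr 1
    rw [phi_add]
    ring
  have hT : S * (starRingEnd ℂ) S = (q : ℂ) := by
    rw [hS, map_sum, Finset.sum_mul_sum]
    have e1 : ∀ k : ℕ, ∑ l ∈ Finset.range q, ff p n q k * (starRingEnd ℂ) (ff p n q l)
        = ∑ y : ZMod q, ff p n q k * (starRingEnd ℂ) (ff p n q y.val) :=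
      fun k => sum_range_eq_zmod q _
    simp only [e1]
    rw [sum_range_eq_zmod]
    rw [Finset.sum_comm]
    have e2 : ∀ y : ZMod q, ∑ x : ZMod q, ff p n q x.val * (starRingEnd ℂ) (ff p n q y.val)
        = ∑ d : ZMod q, ff p n q (y.val + d.val) * (starRingEnd ℂ) (ff p n q y.val) := by
      intro y
      rw [← Equiv.sum_comp (Equiv.addLeft y)
        (fun x : ZMod q => ff p n q x.val * (starRingEnd ℂ) (ff p n q y.val))]
      apply Finset.sum_congr rfl
      intro d _
      show ff p n q ((y + d).val) * (starRingEnd ℂ) (ff p n q y.val)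
          = ff p n q (y.val + d.val) * (starRingEnd ℂ) (ff p n q y.val)
      rw [ZMod.val_add, ff_mod p n q hq0]
    simp only [e2]
    rw [Finset.sum_comm]
    have hinner : ∀ d : ZMod q,
        ∑ y : ZMod q, ff p n q (y.val + d.val) * (starRingEnd ℂ) (ff p n q y.val)
        = ee q (phi p n q d.val) * ∑ y : ZMod q, ee q (2 * p * (d.val : ℤ) * (y.val : ℤ)) := by
      intro d
      rw [Finset.mul_sum]
      apply Finset.sum_congr rfl
      intro y _
      rw [hterm, ee_add]
    have hmain : ∑ d : ZMod q,
        ∑ y : ZMod q, ff p n q (y.val + d.val) * (starRingEnd ℂ) (ff p n q y.val)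
        = (q : ℂ) := by
      rw [Fintype.sum_eq_single (0 : ZMod q)]
      · have h0 : ∀ y : ZMod q,
            ff p n q (y.val + (0 : ZMod q).val) * (starRingEnd ℂ) (ff p n q y.val) = 1 := by
          intro y
          rw [hterm]
          simp [ZMod.val_zero, phi, ee_zero]
        simp only [h0]
        simp [Finset.card_univ, ZMod.card]
      · intro d hd
        rw [hinner d]
        have hzero : ∑ y : ZMod q, ee q (2 * p * (d.val : ℤ) * (y.val : ℤ)) = 0 := by
          rw [← sum_range_eq_zmod q (fun m => ee q (2 * p * (d.val : ℤ) * (m : ℤ)))]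
          exact geom_zero p q hq0 hcop d.val (ZMod.val_lt d)
            (fun h => hd ((ZMod.val_eq_zero d).mp h))
        rw [hzero, mul_zero]
    exact hmain
  have habs : ‖S‖ = Real.sqrt q := by
    have h1 : ((Complex.normSq S : ℝ) : ℂ) = (q : ℂ) := by rw [← Complex.mul_conj]; exact hT
    have h2 : Complex.normSq S = (q : ℝ) := by exact_mod_cast h1
    rw [Complex.norm_def, h2]
  rw [hSrw, norm_mul, habs, norm_div, norm_one, Complex.norm_natCast]
  have hqpos : (0 : ℝ) < q := by exact_mod_cast Nat.pos_of_ne_zero hq0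
  have hs0 : Real.sqrt q ≠ 0 := by positivity
  rw [div_mul_eq_mul_div, one_mul, div_eq_div_iff (by positivity) hs0, one_mul,
    Real.mul_self_sqrt hqpos.le]
end

section
/- For f in the Schwartz class, the Zak transform satisfies the Poisson-type commutation relation Zf(x,ξ) = exp(2iπxξ)·Z𝓕f(ξ, -x) for all real x, ξ, where 𝓕f is the Fourier transform of f. -/
open Real

lemma iter_cexp (c : ℂ) (n : ℕ) :
    iteratedDeriv n (fun t : ℝ => Complex.exp (c * t)) =
      fun t : ℝ => c ^ n * Complex.exp (c * t) := by
  induction n with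
  | zero => simp
  | succ n ih =>
      rw [iteratedDeriv_succ, ih]
      ext t
      have h1 : HasDerivAt (fun t : ℝ => c * (t : ℂ)) c t := by
        simpa using Complex.ofRealCLM.hasDerivAt.const_mul c
      have h : HasDerivAt (fun t : ℝ => Complex.exp (c * ↑t)) (Complex.exp (c * t) * c) t :=
        h1.cexp
      rw [(h.const_mul (c ^ n)).deriv]
      ring

lemma temperate_cexp (a : ℝ) :
    Function.HasTemperateGrowth (fun t : ℝ => Complex.exp ((a : ℂ) * Complex.I * t)) := by
  have : (fun t : ℝ => Complex.exp ((a : ℂ) * Complex.I * t))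
      = fun t : ℝ => Complex.exp (((a : ℂ) * Complex.I) * t) := rfl
  refine ⟨?_, fun n => ⟨0, ‖(a : ℂ) * Complex.I‖ ^ n, fun t => ?_⟩⟩
  · exact ((Complex.contDiff_exp (𝕜 := ℂ)).restrict_scalars ℝ).comp
      ((contDiff_const (c := (a:ℂ) * Complex.I)).mul Complex.ofRealCLM.contDiff)
  · rw [norm_iteratedFDeriv_eq_norm_iteratedDeriv, iter_cexp]
    simp [Complex.norm_exp]

lemma fourier_modulation (f : ℝ → ℂ) (ξ w : ℝ) :
    FourierTransform.fourier
      (fun t : ℝ => f t * Complex.exp ((((-2 : ℝ) * π * ξ : ℝ) : ℂ) * Complex.I * t)) w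
      = FourierTransform.fourier f (w + ξ) := by
  rw [Real.fourier_real_eq, Real.fourier_real_eq]
  congr 1
  ext v
  have h : (↑(2 * π * -(v * w)) * Complex.I)
      + ((((-2 : ℝ) * π * ξ : ℝ) : ℂ) * Complex.I * v)
      = ↑(2 * π * -(v * (w + ξ))) * Complex.I := by push_cast; ring
  calc (Real.fourierChar (-(v * w)) : ℂ) •
        (f v * Complex.exp ((((-2 : ℝ) * π * ξ : ℝ) : ℂ) * Complex.I * v))
      = Complex.exp ((2 * π * -(v * w) : ℝ) * Complex.I)
          * Complex.exp ((((-2 : ℝ) * π * ξ : ℝ) : ℂ) * Complex.I * v) * f v := by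
        simp only [Circle.smul_def, Real.fourierChar_apply, smul_eq_mul]; ring
    _ = Complex.exp ((2 * π * -(v * (w + ξ)) : ℝ) * Complex.I) * f v := by
        rw [← Complex.exp_add, h]
    _ = (Real.fourierChar (-(v * (w + ξ))) : ℂ) • f v := by
        simp only [Circle.smul_def, Real.fourierChar_apply, smul_eq_mul]

noncomputable def Zak (f : ℝ → ℂ) (x ξ : ℝ) : ℂ :=
  ∑' k : ℤ, f (x + (k : ℝ)) * Complex.exp (-2 * (π : ℂ) * Complex.I * (k : ℂ) * (ξ : ℂ))

theorem zak_poisson (f : SchwartzMap ℝ ℂ) (x ξ : ℝ) :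
    Zak (⇑f) x ξ
      = Complex.exp (2 * (π : ℂ) * Complex.I * (x : ℂ) * (ξ : ℂ))
          * Zak (FourierTransform.fourier (⇑f : ℝ → ℂ)) ξ (-x) := by
  set a : ℝ := (-2 : ℝ) * π * ξ with ha
  set g : SchwartzMap ℝ ℂ :=
    SchwartzMap.bilinLeftCLM (ContinuousLinearMap.mul ℝ ℂ) (temperate_cexp a) f with hgdef
  have hg : ∀ t : ℝ, g t = f t * Complex.exp ((a : ℂ) * Complex.I * t) := fun t => rfl
  have key1 : ∀ k : ℤ,
      (f (x + (k : ℝ))) * Complex.exp (-2 * (π : ℂ) * Complex.I * (k : ℂ) * (ξ : ℂ))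
        = Complex.exp (2 * (π : ℂ) * Complex.I * (x : ℂ) * (ξ : ℂ)) * g (x + (k : ℝ)) := by
    intro k
    rw [hg]
    have h : (2 * (π : ℂ) * Complex.I * (x : ℂ) * (ξ : ℂ))
        + ((a : ℂ) * Complex.I * ((x : ℝ) + (k : ℝ) : ℝ))
        = -2 * (π : ℂ) * Complex.I * (k : ℂ) * (ξ : ℂ) := by
      rw [ha]; push_cast; ring
    calc f (x + (k : ℝ)) * Complex.exp (-2 * (π : ℂ) * Complex.I * (k : ℂ) * (ξ : ℂ))
        = f (x + (k : ℝ)) * Complex.exp ((2 * (π : ℂ) * Complex.I * (x : ℂ) * (ξ : ℂ))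
            + ((a : ℂ) * Complex.I * ((x : ℝ) + (k : ℝ) : ℝ))) := by rw [h]
      _ = _ := by rw [Complex.exp_add]; push_cast; ring
  have key2 : ∀ n : ℤ,
      (SchwartzMap.fourierTransformCLM ℝ g) (n : ℝ) * fourier n ((x : ℝ) : UnitAddCircle)
        = FourierTransform.fourier (⇑f) (ξ + (n : ℝ))
            * Complex.exp (-2 * (π : ℂ) * Complex.I * (n : ℂ) * ((-x : ℝ) : ℂ)) := by
    intro n
    rw [SchwartzMap.fourierTransformCLM_apply, SchwartzMap.fourier_coe]
    have hgc : ⇑g = fun t : ℝ => f t * Complex.exp ((a : ℂ) * Complex.I * t) := rfl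
    rw [hgc, ha, fourier_modulation, fourier_coe_apply]
    rw [add_comm ξ (n : ℝ)]
    congr 1
    rw [show ((-x : ℝ) : ℂ) = -(x : ℂ) by push_cast; ring]
    congr 1
    push_cast
    field_simp
  calc Zak (⇑f) x ξ
      = ∑' k : ℤ, Complex.exp (2 * (π : ℂ) * Complex.I * (x : ℂ) * (ξ : ℂ)) * g (x + (k : ℝ)) := by
        exact tsum_congr key1
    _ = Complex.exp (2 * (π : ℂ) * Complex.I * (x : ℂ) * (ξ : ℂ)) * ∑' k : ℤ, g (x + (k : ℝ)) :=
        tsum_mul_left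
    _ = _ := by
        rw [SchwartzMap.tsum_eq_tsum_fourier g x]
        congr 1
        exact tsum_congr key2
end

section
/- Let f ∈ L²(ℝ) and let Z_{N,N'}γ(x,ξ) = Σ_{k=-N}^{N'} γ(x+k)e^{-2iπkξ} be the truncated Zak transform of γ(t) = exp(iπ(p/q)t²) (with p,q coprime integers, q ≥ 1). Then for f Schwartz, ⟨Zf, Z_{N,N'}γ⟩_{L²([0,1]²)} = ∫_{-N}^{N'+1} f(t)·exp(-iπ(p/q)t²) dt, where the inner product is conjugate-linear in the second argument. -/
open Real MeasureTheory

/-- The chirp `γ(t) = exp(iπ(p/q)t²)`. -/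
noncomputable def chirp (p : ℤ) (q : ℕ) (t : ℝ) : ℂ :=
  Complex.exp (Complex.I * (π : ℂ) * (p : ℂ) * (t : ℂ) ^ 2 / (q : ℂ))

lemma schwartz_summable (f : SchwartzMap ℝ ℂ) (x : ℝ) :
    Summable (fun j : ℤ => ‖f (x + (j : ℝ))‖) := by
  obtain ⟨C, hCpos, hC⟩ := f.decay 2 0
  simp only [norm_iteratedFDeriv_zero] at hC
  have hsum : Summable (fun j : ℤ => 4 * C / (j : ℝ) ^ 2) := by
    have h0 : Summable (fun j : ℤ => 1 / (j : ℝ) ^ 2) :=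
      (Real.summable_one_div_int_pow (p := 2)).2 one_lt_two
    have := h0.mul_left (4 * C)
    simpa [div_eq_mul_inv, mul_assoc] using this
  apply Summable.of_norm_bounded_eventually hsum
  rw [Filter.eventually_cofinite]
  apply Set.Finite.subset (Set.finite_Icc (-(⌈2 * (|x| + 1)⌉)) (⌈2 * (|x| + 1)⌉))
  intro j hj
  simp only [Set.mem_setOf_eq, not_le] at hj
  by_contra hmem
  refine absurd hj (not_lt.2 ?_)
  simp only [Set.mem_Icc, not_and_or, not_le] at hmem
  have hc0 : (0:ℤ) < ⌈2 * (|x| + 1)⌉ := Int.ceil_pos.2 (by positivity)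
  have hjabs : ⌈2 * (|x| + 1)⌉ ≤ |j| := by
    rcases hmem with h | h
    · rw [abs_of_neg (show j < 0 by omega)]; omega
    · rw [abs_of_pos (show 0 < j by omega)]; omega
  have hjx : 2 * (|x| + 1) ≤ |(j : ℝ)| := by
    calc 2 * (|x| + 1) ≤ (⌈2 * (|x| + 1)⌉ : ℝ) := Int.le_ceil _
      _ ≤ ((|j| : ℤ) : ℝ) := by exact_mod_cast hjabs
      _ = |(j : ℝ)| := by push_cast; rfl
  have h2 : |(j:ℝ)| ≤ |x + j| + |x| := by
    calc |(j:ℝ)| = |(x + j) + (-x)| := by ring_nf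
      _ ≤ |x + j| + |-x| := abs_add_le _ _
      _ = |x + j| + |x| := by rw [abs_neg]
  have hxj : |(j:ℝ)| / 2 ≤ |x + j| := by nlinarith [abs_nonneg x]
  have hkey : |x + (j:ℝ)| ^ 2 * ‖f (x + j)‖ ≤ C := by
    have := hC (x + j); rwa [Real.norm_eq_abs] at this
  have hjr : 0 < |(j:ℝ)| := lt_of_lt_of_le (by positivity) hjx
  have hj2 : 0 < (j:ℝ)^2 := by rw [← sq_abs]; positivity
  have hsq : (j:ℝ)^2 ≤ 4 * |x + (j:ℝ)|^2 := by
    have h := sq_abs (j:ℝ); nlinarith [abs_nonneg (j:ℝ)]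
  rw [norm_norm, le_div_iff₀ hj2]
  nlinarith [mul_le_mul_of_nonneg_left hsq (norm_nonneg (f (x + (j:ℝ))))]


lemma exp_orth (n : ℤ) : (∫ ξ in (0:ℝ)..1, Complex.exp (-2 * (π:ℂ) * Complex.I * (n:ℂ) * (ξ:ℂ)))
    = if n = 0 then 1 else 0 := by
  rcases eq_or_ne n 0 with h | h
  · simp [h]
  · rw [if_neg h]
    have hc : (-2 * (π:ℂ) * Complex.I * (n:ℂ)) ≠ 0 := by
      simp [Complex.ext_iff, Real.pi_ne_zero, Complex.I_ne_zero, h]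
    have := integral_exp_mul_complex (a := 0) (b := 1) hc
    simp only [mul_comm] at this
    rw [show (fun ξ : ℝ => Complex.exp (-2 * (π:ℂ) * Complex.I * (n:ℂ) * (ξ:ℂ)))
        = (fun ξ : ℝ => Complex.exp ((-2 * (π:ℂ) * Complex.I * (n:ℂ)) * (ξ:ℂ))) from rfl]
    rw [integral_exp_mul_complex hc]
    have h1 : (-2 * (π:ℂ) * Complex.I * (n:ℂ)) * (1:ℝ) = (-n : ℤ) * (2 * π * Complex.I) := by
      push_cast; ring
    rw [h1, Complex.exp_int_mul_two_pi_mul_I]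
    simp



lemma normE (k : ℤ) (ξ : ℝ) : ‖Complex.exp (-2 * (π:ℂ) * Complex.I * (k:ℂ) * (ξ:ℂ))‖ = 1 := by
  rw [show (-2 * (π:ℂ) * Complex.I * (k:ℂ) * (ξ:ℂ)) = ((-2*π*k*ξ : ℝ) : ℂ) * Complex.I by
    push_cast; ring]
  rw [Complex.norm_exp_ofReal_mul_I]

lemma norm_chirp (p : ℤ) (q : ℕ) (t : ℝ) : ‖chirp p q t‖ = 1 := by
  rw [chirp, show (Complex.I * (π:ℂ) * (p:ℂ) * (t:ℂ)^2 / (q:ℂ)) = ((π*p*t^2/q : ℝ) : ℂ) * Complex.I by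
    push_cast; ring]
  rw [Complex.norm_exp_ofReal_mul_I]

lemma conjE (k : ℤ) (ξ : ℝ) :
    (starRingEnd ℂ) (Complex.exp (-2 * (π:ℂ) * Complex.I * (k:ℂ) * (ξ:ℂ)))
      = Complex.exp (2 * (π:ℂ) * Complex.I * (k:ℂ) * (ξ:ℂ)) := by
  rw [show (-2 * (π:ℂ) * Complex.I * (k:ℂ) * (ξ:ℂ)) = ((-2*π*k*ξ : ℝ) : ℂ) * Complex.I by
        push_cast; ring,
      show (2 * (π:ℂ) * Complex.I * (k:ℂ) * (ξ:ℂ)) = ((2*π*k*ξ : ℝ) : ℂ) * Complex.I by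
        push_cast; ring,
      ← Complex.exp_conj, map_mul, Complex.conj_ofReal, Complex.conj_I]
  congr 1
  push_cast
  ring

lemma zak_cont (f : SchwartzMap ℝ ℂ) (x : ℝ) : Continuous (fun ξ => Zak (⇑f) x ξ) := by
  apply continuous_tsum
  · intro j
    exact continuous_const.mul (Complex.continuous_exp.comp (by continuity))
  · exact schwartz_summable f x
  · intro j ξ
    rw [norm_mul, normE, mul_one]

lemma inner_int (f : SchwartzMap ℝ ℂ) (p : ℤ) (q : ℕ) (N N' : ℕ) (x : ℝ) :
    (∫ ξ in (0:ℝ)..1,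
        Zak (⇑f) x ξ *
          (starRingEnd ℂ) (∑ k ∈ Finset.Icc (-(N : ℤ)) (N' : ℤ),
            chirp p q (x + (k : ℝ)) * Complex.exp (-2 * (π : ℂ) * Complex.I * (k : ℂ) * (ξ : ℂ))))
      = ∑ k ∈ Finset.Icc (-(N : ℤ)) (N' : ℤ),
          f (x + (k : ℝ)) * (starRingEnd ℂ) (chirp p q (x + (k : ℝ))) := by
  have hcongr : ∀ ξ : ℝ,
      Zak (⇑f) x ξ *
          (starRingEnd ℂ) (∑ k ∈ Finset.Icc (-(N : ℤ)) (N' : ℤ),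
            chirp p q (x + (k : ℝ)) * Complex.exp (-2 * (π : ℂ) * Complex.I * (k : ℂ) * (ξ : ℂ)))
        = ∑ k ∈ Finset.Icc (-(N : ℤ)) (N' : ℤ),
            Zak (⇑f) x ξ * ((starRingEnd ℂ) (chirp p q (x + (k : ℝ))) *
              Complex.exp (2 * (π : ℂ) * Complex.I * (k : ℂ) * (ξ : ℂ))) := by
    intro ξ
    rw [map_sum, Finset.mul_sum]
    refine Finset.sum_congr rfl fun k _ => ?_
    rw [map_mul, conjE]
  rw [intervalIntegral.integral_congr (g := fun ξ => ∑ k ∈ Finset.Icc (-(N : ℤ)) (N' : ℤ),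
      Zak (⇑f) x ξ * ((starRingEnd ℂ) (chirp p q (x + (k : ℝ))) *
        Complex.exp (2 * (π : ℂ) * Complex.I * (k : ℂ) * (ξ : ℂ)))) (fun ξ _ => hcongr ξ)]
  rw [intervalIntegral.integral_finset_sum]
  swap
  · intro k _
    apply Continuous.intervalIntegrable
    exact (zak_cont f x).mul (continuous_const.mul (Complex.continuous_exp.comp (by continuity)))
  refine Finset.sum_congr rfl fun k _ => ?_
  -- now fixed k
  have key : (∫ ξ in (0:ℝ)..1, Zak (⇑f) x ξ *
      ((starRingEnd ℂ) (chirp p q (x + (k : ℝ))) *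
        Complex.exp (2 * (π : ℂ) * Complex.I * (k : ℂ) * (ξ : ℂ))))
      = ∑' j : ℤ, (f (x + (j : ℝ)) * (starRingEnd ℂ) (chirp p q (x + (k : ℝ))) *
          ∫ ξ in (0:ℝ)..1, Complex.exp (-2 * (π : ℂ) * Complex.I * ((j - k : ℤ) : ℂ) * (ξ : ℂ))) := by
    have hfun : ∀ ξ : ℝ, Zak (⇑f) x ξ *
        ((starRingEnd ℂ) (chirp p q (x + (k : ℝ))) *
          Complex.exp (2 * (π : ℂ) * Complex.I * (k : ℂ) * (ξ : ℂ)))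
        = ∑' j : ℤ, (f (x + (j : ℝ)) * (starRingEnd ℂ) (chirp p q (x + (k : ℝ))) *
            Complex.exp (-2 * (π : ℂ) * Complex.I * ((j - k : ℤ) : ℂ) * (ξ : ℂ))) := by
      intro ξ
      rw [Zak, ← tsum_mul_right]
      refine tsum_congr fun j => ?_
      have hee : Complex.exp (-2 * (π:ℂ) * Complex.I * (j:ℂ) * (ξ:ℂ)) *
          Complex.exp (2 * (π:ℂ) * Complex.I * (k:ℂ) * (ξ:ℂ))
          = Complex.exp (-2 * (π:ℂ) * Complex.I * ((j - k : ℤ) : ℂ) * (ξ:ℂ)) := by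
        rw [← Complex.exp_add]; congr 1; push_cast; ring
      rw [← hee]
      ring
    rw [intervalIntegral.integral_congr (fun ξ _ => hfun ξ)]
    rw [intervalIntegral.integral_of_le zero_le_one]
    rw [← MeasureTheory.integral_tsum_of_summable_integral_norm]
    · refine tsum_congr fun j => ?_
      rw [MeasureTheory.integral_const_mul, ← intervalIntegral.integral_of_le zero_le_one]
    · intro j
      apply Continuous.integrableOn_Ioc
      exact continuous_const.mul (Complex.continuous_exp.comp (by continuity))
    · have : ∀ j : ℤ, (∫ ξ in Set.Ioc (0:ℝ) 1, ‖f (x + (j : ℝ)) * (starRingEnd ℂ) (chirp p q (x + (k : ℝ))) *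
          Complex.exp (-2 * (π : ℂ) * Complex.I * ((j - k : ℤ) : ℂ) * (ξ : ℂ))‖)
          = ‖f (x + (j : ℝ))‖ := by
        intro j
        have : ∀ ξ : ℝ, ‖f (x + (j : ℝ)) * (starRingEnd ℂ) (chirp p q (x + (k : ℝ))) *
            Complex.exp (-2 * (π : ℂ) * Complex.I * ((j - k : ℤ) : ℂ) * (ξ : ℂ))‖
            = ‖f (x + (j : ℝ))‖ := by
          intro ξ
          rw [norm_mul, norm_mul, normE, RCLike.norm_conj, norm_chirp, mul_one, mul_one]
        simp only [this]
        simp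
      simpa only [this] using schwartz_summable f x
  rw [key]
  have horth : ∀ j : ℤ, (f (x + (j : ℝ)) * (starRingEnd ℂ) (chirp p q (x + (k : ℝ))) *
      ∫ ξ in (0:ℝ)..1, Complex.exp (-2 * (π : ℂ) * Complex.I * ((j - k : ℤ) : ℂ) * (ξ : ℂ)))
      = if j = k then f (x + (k : ℝ)) * (starRingEnd ℂ) (chirp p q (x + (k : ℝ))) else 0 := by
    intro j
    rw [exp_orth (j - k)]
    rcases eq_or_ne j k with h | h
    · simp [h]
    · rw [if_neg (sub_ne_zero.2 h), if_neg h, mul_zero]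
  rw [tsum_congr horth, tsum_eq_single k (fun j hj => if_neg hj)]
  simp

lemma conj_chirp (p : ℤ) (q : ℕ) (t : ℝ) : (starRingEnd ℂ) (chirp p q t)
    = Complex.exp (-Complex.I * (π:ℂ) * (p:ℂ) * (t:ℂ)^2 / (q:ℂ)) := by
  rw [chirp, show (Complex.I * (π:ℂ) * (p:ℂ) * (t:ℂ)^2 / (q:ℂ))
      = ((π*p*t^2/q : ℝ):ℂ) * Complex.I by push_cast; ring,
    ← Complex.exp_conj, map_mul, Complex.conj_ofReal, Complex.conj_I]
  congr 1; push_cast; ring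

theorem inner_zak_truncated_zak_chirp (p : ℤ) (q : ℕ) (hq : 1 ≤ q)
    (hcop : Int.gcd p (q : ℤ) = 1) (N N' : ℕ) (f : SchwartzMap ℝ ℂ) :
    (∫ x in (0:ℝ)..1, ∫ ξ in (0:ℝ)..1,
        Zak (⇑f) x ξ *
          (starRingEnd ℂ) (∑ k ∈ Finset.Icc (-(N : ℤ)) (N' : ℤ),
            chirp p q (x + (k : ℝ)) * Complex.exp (-2 * (π : ℂ) * Complex.I * (k : ℂ) * (ξ : ℂ))))
      = ∫ t in (-(N : ℝ))..((N' : ℝ) + 1),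
          f t * Complex.exp (-Complex.I * (π : ℂ) * (p : ℂ) * (t : ℂ) ^ 2 / (q : ℂ)) := by
  have hg : Continuous (fun t : ℝ =>
      (f t : ℂ) * Complex.exp (-Complex.I * (π:ℂ) * (p:ℂ) * (t:ℂ)^2 / (q:ℂ))) :=
    f.continuous.mul (Complex.continuous_exp.comp (by continuity))
  rw [intervalIntegral.integral_congr (g := fun x => ∑ k ∈ Finset.Icc (-(N : ℤ)) (N' : ℤ),
      f (x + (k : ℝ)) * (starRingEnd ℂ) (chirp p q (x + (k : ℝ))))
      (fun x _ => inner_int f p q N N' x)]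
  rw [intervalIntegral.integral_finset_sum (fun k _ => by
    apply Continuous.intervalIntegrable
    simp only [conj_chirp]
    exact hg.comp (by continuity))]
  have hterm : ∀ k : ℤ, (∫ x in (0:ℝ)..1, f (x + (k:ℝ)) * (starRingEnd ℂ) (chirp p q (x + (k:ℝ))))
      = ∫ t in (k:ℝ)..((k:ℝ)+1),
          f t * Complex.exp (-Complex.I * (π:ℂ) * (p:ℂ) * (t:ℂ)^2 / (q:ℂ)) := by
    intro k
    have h1 : ∀ x : ℝ, f (x + (k:ℝ)) * (starRingEnd ℂ) (chirp p q (x + (k:ℝ)))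
        = (fun t : ℝ => f t * Complex.exp (-Complex.I * (π:ℂ) * (p:ℂ) * (t:ℂ)^2 / (q:ℂ))) (x + (k:ℝ)) := by
      intro x; rw [conj_chirp]
    rw [intervalIntegral.integral_congr (fun x _ => h1 x),
      intervalIntegral.integral_comp_add_right (a := 0) (b := 1)
        (fun t : ℝ => f t * Complex.exp (-Complex.I * (π:ℂ) * (p:ℂ) * (t:ℂ)^2 / (q:ℂ))) (k:ℝ),
      zero_add, add_comm (1:ℝ)]
  simp only [hterm]
  have hadj := intervalIntegral.sum_integral_adjacent_intervals
    (a := fun i : ℕ => -(N:ℝ) + i) (n := N + N' + 1) (μ := volume)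
    (f := fun t : ℝ => f t * Complex.exp (-Complex.I * (π:ℂ) * (p:ℂ) * (t:ℂ)^2 / (q:ℂ)))
    (fun i _ => hg.intervalIntegrable _ _)
  beta_reduce at hadj
  have ha0 : -(N:ℝ) + ((0:ℕ):ℝ) = -(N:ℝ) := by push_cast; ring
  have han : -(N:ℝ) + ((N + N' + 1 : ℕ) : ℝ) = (N':ℝ) + 1 := by push_cast; ring
  rw [ha0, han] at hadj
  rw [← hadj]
  refine Finset.sum_nbij' (fun k => (k + N).toNat) (fun i => (i : ℤ) - N) ?_ ?_ ?_ ?_ ?_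
  · intro k hk; simp only [Finset.mem_Icc] at hk; simp only [Finset.mem_range]; omega
  · intro i hi; simp only [Finset.mem_range] at hi; simp only [Finset.mem_Icc]; omega
  · intro k hk; simp only [Finset.mem_Icc] at hk
    show ((k + (N:ℤ)).toNat : ℤ) - N = k; omega
  · intro i hi; simp only [Finset.mem_range] at hi
    show (((i:ℤ) - N + N).toNat) = i; omega
  · intro k hk
    simp only [Finset.mem_Icc] at hk
    have ht : ((k + (N:ℤ)).toNat : ℤ) = k + N := by omega
    have hr : (((k + (N:ℤ)).toNat : ℕ) : ℝ) = (k:ℝ) + (N:ℝ) := by exact_mod_cast ht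
    have e1 : (k:ℝ) = -(N:ℝ) + (((k + (N:ℤ)).toNat : ℕ) : ℝ) := by rw [hr]; ring
    have e2 : (k:ℝ) + 1 = -(N:ℝ) + ((((k + (N:ℤ)).toNat : ℕ) + 1 : ℕ) : ℝ) := by
      push_cast [hr]; ring
    rw [e2, e1]
end
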